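/- Let b be a real number with 0 ≤ b ≤ 1, let θ be real, let m be a natural number, and suppose |b − e^{iθ}| ≤ ε with ε ≤ 1/2. Then |b^m − e^{imθ}| ≤ √(7/3) · m · ε. -/

import Mathlib

open Complex

lemma abs_sin_nat_mul_le' (n : ℕ) (x : ℝ) : |Real.sin (n * x)| ≤ n * |Real.sin x| := by
  induction n with
  | zero => simp
  | succ n ih =>
    have : Real.sin ((n + 1 : ℕ) * x) = Real.sin (n * x) * Real.cos x
        + Real.cos (n * x) * Real.sin x := by
      push_cast
      rw [add_mul, one_mul, Real.sin_add]
    rw [this]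
    calc |Real.sin (n * x) * Real.cos x + Real.cos (n * x) * Real.sin x|
        ≤ |Real.sin (n * x) * Real.cos x| + |Real.cos (n * x) * Real.sin x| := abs_add_le _ _
      _ ≤ |Real.sin (n * x)| * 1 + 1 * |Real.sin x| := by
          rw [abs_mul, abs_mul]
          gcongr <;> [exact Real.abs_cos_le_one x; exact Real.abs_cos_le_one _]
      _ ≤ (n : ℝ) * |Real.sin x| + 1 * |Real.sin x| := by
          rw [mul_one]; gcongr
      _ = ((n + 1 : ℕ) : ℝ) * |Real.sin x| := by push_cast; ring
  
lemma one_sub_cos_eq (x : ℝ) : 1 - Real.cos x = 2 * Real.sin (x / 2) ^ 2 := by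
  have h2 : Real.cos (2 * (x / 2)) = Real.cos (x/2) ^ 2 - Real.sin (x/2) ^ 2 :=
    Real.cos_two_mul' _
  have h1 : Real.sin (x/2) ^ 2 + Real.cos (x/2) ^ 2 = 1 := Real.sin_sq_add_cos_sq _
  have hx : 2 * (x / 2) = x := by ring
  rw [hx] at h2
  nlinarith

lemma one_sub_cos_nat_mul_le (n : ℕ) (x : ℝ) :
    1 - Real.cos (n * x) ≤ n ^ 2 * (1 - Real.cos x) := by
  rw [one_sub_cos_eq, one_sub_cos_eq]
  have h : |Real.sin ((n : ℝ) * x / 2)| ≤ n * |Real.sin (x / 2)| := by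
    have := abs_sin_nat_mul_le' n (x / 2)
    rwa [show (n : ℝ) * (x / 2) = (n : ℝ) * x / 2 by ring] at this
  have h2 : Real.sin ((n : ℝ) * x / 2) ^ 2 ≤ (n * |Real.sin (x / 2)|) ^ 2 := by
    rw [← _root_.sq_abs (Real.sin ((n : ℝ) * x / 2))]
    exact pow_le_pow_left₀ (abs_nonneg _) h 2
  rw [mul_pow, _root_.sq_abs] at h2
  nlinarith

set_option maxHeartbeats 1000000 in
/-- If `0 ≤ b ≤ 1`, `|b - e^{iθ}| ≤ ε` and `ε ≤ 1/2`, then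
`|b^m - e^{imθ}| ≤ √(7/3) * m * ε`. -/
theorem pow_sub_exp_abs_le (b θ ε : ℝ) (m : ℕ)
    (hb0 : 0 ≤ b) (hb1 : b ≤ 1) (hε : ε ≤ 1 / 2)
    (h : ‖(b : ℂ) - Complex.exp (θ * Complex.I)‖ ≤ ε) :
    ‖(b : ℂ) ^ m - Complex.exp ((m : ℂ) * θ * Complex.I)‖ ≤
      Real.sqrt (7 / 3) * m * ε := by
  have hε0 : 0 ≤ ε := le_trans (norm_nonneg _) h
  -- first show the stronger bound abs ≤ m * ε
  have key : ‖(b : ℂ) ^ m - Complex.exp ((m : ℂ) * θ * Complex.I)‖ ≤ m * ε := by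
    rcases Nat.eq_zero_or_pos m with hm | hm
    · subst hm; simp
    -- square of abs of hypothesis
    have habs1 : ‖(b : ℂ) - Complex.exp (θ * Complex.I)‖ ^ 2
        = (1 - b) ^ 2 + 2 * b * (1 - Real.cos θ) := by
      rw [Complex.sq_norm, Complex.exp_mul_I]
      simp only [Complex.normSq_apply, Complex.sub_re, Complex.sub_im, Complex.ofReal_re,
        Complex.ofReal_im, Complex.add_re, Complex.add_im, Complex.mul_re, Complex.mul_im,
        Complex.cos_ofReal_re, Complex.sin_ofReal_re, Complex.cos_ofReal_im,
        Complex.sin_ofReal_im, Complex.I_re, Complex.I_im]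
      have := Real.sin_sq_add_cos_sq θ
      ring_nf
      nlinarith [Real.sin_sq_add_cos_sq θ]
    have hA : (1 - b) ^ 2 + 2 * b * (1 - Real.cos θ) ≤ ε ^ 2 := by
      rw [← habs1]
      exact pow_le_pow_left₀ (norm_nonneg _) h 2
    -- square of abs of goal
    have habs2 : ‖(b : ℂ) ^ m - Complex.exp ((m : ℂ) * θ * Complex.I)‖ ^ 2
        = (1 - b ^ m) ^ 2 + 2 * b ^ m * (1 - Real.cos (m * θ)) := by
      have : ((m : ℂ) * θ * Complex.I) = ((m * θ : ℝ) : ℂ) * Complex.I := by push_cast; ring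
      rw [this, Complex.sq_norm, Complex.exp_mul_I]
      have hbm : ((b : ℂ) ^ m) = ((b ^ m : ℝ) : ℂ) := by push_cast; ring
      rw [hbm]
      simp only [Complex.normSq_apply, Complex.sub_re, Complex.sub_im, Complex.ofReal_re,
        Complex.ofReal_im, Complex.add_re, Complex.add_im, Complex.mul_re, Complex.mul_im,
        Complex.cos_ofReal_re, Complex.sin_ofReal_re, Complex.cos_ofReal_im,
        Complex.sin_ofReal_im, Complex.I_re, Complex.I_im]
      nlinarith [Real.sin_sq_add_cos_sq (m * θ)]
    -- basic facts
    have hbm0 : 0 ≤ b ^ m := pow_nonneg hb0 m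
    have hbm1 : b ^ m ≤ 1 := pow_le_one₀ hb0 hb1
    have hbmb : b ^ m ≤ b := pow_le_of_le_one hb0 hb1 (Nat.one_le_iff_ne_zero.mp hm)
    have hcosθ : 0 ≤ 1 - Real.cos θ := by nlinarith [Real.cos_le_one θ]
    have hcosm : 1 - Real.cos ((m : ℝ) * θ) ≤ (m : ℝ) ^ 2 * (1 - Real.cos θ) :=
      one_sub_cos_nat_mul_le m θ
    -- 1 - b^m ≤ m * (1 - b) via Bernoulli
    have hber : 1 + (m : ℝ) * (b - 1) ≤ b ^ m := by
      have := one_add_mul_le_pow (a := b - 1) (by nlinarith) m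
      simpa using this
    have hsum : 1 - b ^ m ≤ (m : ℝ) * (1 - b) := by nlinarith
    have hsq : ‖(b : ℂ) ^ m - Complex.exp ((m : ℂ) * θ * Complex.I)‖ ^ 2
        ≤ ((m : ℝ) * ε) ^ 2 := by
      rw [habs2]
      have h1 : (1 - b ^ m) ^ 2 ≤ ((m : ℝ) * (1 - b)) ^ 2 := by
        exact pow_le_pow_left₀ (by nlinarith) hsum 2
      have h2 : 2 * b ^ m * (1 - Real.cos ((m : ℝ) * θ))
          ≤ (m : ℝ) ^ 2 * (2 * b * (1 - Real.cos θ)) := by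
        have : 2 * b ^ m * (1 - Real.cos ((m : ℝ) * θ))
            ≤ 2 * b ^ m * ((m : ℝ) ^ 2 * (1 - Real.cos θ)) := by
          apply mul_le_mul_of_nonneg_left hcosm (by positivity)
        nlinarith [mul_nonneg (mul_nonneg (sq_nonneg (m : ℝ)) hcosθ) (sub_nonneg.mpr hbmb)]
      have h3 : ((m : ℝ) * (1 - b)) ^ 2 + (m : ℝ) ^ 2 * (2 * b * (1 - Real.cos θ))
          ≤ ((m : ℝ) * ε) ^ 2 := by nlinarith [sq_nonneg (m : ℝ)]
      linarith
    have hmε : 0 ≤ (m : ℝ) * ε := by positivity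
    exact (pow_le_pow_iff_left₀ (norm_nonneg _) hmε (by norm_num)).mp hsq
  calc ‖(b : ℂ) ^ m - Complex.exp ((m : ℂ) * θ * Complex.I)‖
      ≤ m * ε := key
    _ = 1 * m * ε := by ring
    _ ≤ Real.sqrt (7 / 3) * m * ε := by
        gcongr
        rw [show (1 : ℝ) = Real.sqrt 1 by simp]
        exact Real.sqrt_le_sqrt (by norm_num)
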